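/- Let M be a contract, a ∈ A, and r ∈ R(a;M). Under Assumption 1 (ranked incentives): if there exists r' ∈ R with r ≻_AI r', then there exists (ã,t̃) ∈ M with ã ≤ a and V(r;M) = u_A(ã,r) − t̃; symmetrically, if there exists r' ∈ R with r' ≻_AI r, then there exists (ã,t̃) ∈ M with ã ≥ a and V(r;M) = u_A(ã,r) − t̃. -/

import Mathlib

open MeasureTheory Set

/-- The agent's value of optimally choosing a plan from contract `M` given outsider action `r`:
`V(r;M) = max_{(a,t) ∈ M} (u_A(a,r) - t)`. -/
noncomputable def Vfun (uA : ℝ → ℝ → ℝ) (M : Set (ℝ × ℝ)) (r : ℝ) : ℝ :=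
  sSup ((fun p : ℝ × ℝ => uA p.1 r - p.2) '' M)

/-- The dual transfer `T(a;M) = max_{r ∈ R} (u_A(a,r) - V(r;M))`. -/
noncomputable def Tfun (uA : ℝ → ℝ → ℝ) (R : Set ℝ) (M : Set (ℝ × ℝ)) (a : ℝ) : ℝ :=
  sSup ((fun r => uA a r - Vfun uA M r) '' R)

/-- The set of dual replies `R(a;M)`: maximizers of `r ↦ u_A(a,r) - V(r;M)` over `R`. -/
def dualReplies (uA : ℝ → ℝ → ℝ) (R : Set ℝ) (M : Set (ℝ × ℝ)) (a : ℝ) : Set ℝ :=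
  {r | r ∈ R ∧ uA a r - Vfun uA M r = Tfun uA R M a}

/-- A contract is a nonempty compact subset of `A × ℝ` where `A = [a₀, ā]`. -/
def IsContract (a0 abar : ℝ) (M : Set (ℝ × ℝ)) : Prop :=
  M.Nonempty ∧ IsCompact M ∧ M ⊆ (Set.Icc a0 abar) ×ˢ (Set.univ : Set ℝ)

/-- `r₁ ≽_AI r₂`: `r₁` weakly dominates `r₂` in the order of agent incentives, where
`d1 a r` denotes the partial derivative `∂₁u_A(a,r)`. -/
def succeqAI (d1 : ℝ → ℝ → ℝ) (A : Set ℝ) (r1 r2 : ℝ) : Prop :=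
  ∀ a ∈ A, d1 a r2 ≤ d1 a r1

/-- `r₁ ≻_AI r₂`: strict dominance in the order of agent incentives. -/
def succAI (d1 : ℝ → ℝ → ℝ) (A : Set ℝ) (r1 r2 : ℝ) : Prop :=
  succeqAI d1 A r1 r2 ∧ ¬ succeqAI d1 A r2 r1

/-- Assumption 1 (ranked incentives): `≽_AI` is complete on `R`, and strict dominance gives
strictly higher agent incentives everywhere. -/
def RankedIncentives (d1 : ℝ → ℝ → ℝ) (A R : Set ℝ) : Prop :=
  (∀ r1 ∈ R, ∀ r2 ∈ R, succeqAI d1 A r1 r2 ∨ succeqAI d1 A r2 r1) ∧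
  (∀ r1 ∈ R, ∀ r2 ∈ R, succAI d1 A r1 r2 → ∀ a ∈ A, d1 a r2 < d1 a r1)

/-- The maximum in the definition of `Vfun` is attained. -/
lemma argmax_lemma (uA : ℝ → ℝ → ℝ) (huA : Continuous fun p : ℝ × ℝ => uA p.1 p.2)
    (K : Set (ℝ × ℝ)) (hK : IsCompact K) (hne : K.Nonempty) (s : ℝ) :
    ∃ p ∈ K, Vfun uA K s = uA p.1 s - p.2 ∧ ∀ q ∈ K, uA q.1 s - q.2 ≤ uA p.1 s - p.2 := by
  have hc : ContinuousOn (fun p : ℝ × ℝ => uA p.1 s - p.2) K :=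
    ((huA.comp (continuous_fst.prodMk continuous_const)).sub continuous_snd).continuousOn
  obtain ⟨p, hpK, hmax⟩ := hK.exists_isMaxOn hne hc
  have hmax' : ∀ q ∈ K, uA q.1 s - q.2 ≤ uA p.1 s - p.2 := fun q hq => (isMaxOn_iff.1 hmax) q hq
  refine ⟨p, hpK, ?_, hmax'⟩
  exact IsGreatest.csSup_eq ⟨mem_image_of_mem _ hpK, by rintro y ⟨q, hq, rfl⟩; exact hmax' q hq⟩

lemma core (a0 abar rlo rhi : ℝ) (hR : rlo ≤ rhi)
    (uA : ℝ → ℝ → ℝ) (huA : Continuous fun p : ℝ × ℝ => uA p.1 p.2)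
    (d1 : ℝ → ℝ → ℝ)
    (hd1 : ∀ a r : ℝ, HasDerivAt (fun x => uA x r) (d1 a r) a)
    (hd1c : Continuous fun p : ℝ × ℝ => d1 p.1 p.2)
    (hRI : RankedIncentives d1 (Set.Icc a0 abar) (Set.Icc rlo rhi))
    (M : Set (ℝ × ℝ)) (hM : IsContract a0 abar M)
    (a : ℝ) (ha : a ∈ Set.Icc a0 abar)
    (r : ℝ) (hrDR : r ∈ dualReplies uA (Set.Icc rlo rhi) M a)
    (r' : ℝ) (hr' : r' ∈ Set.Icc rlo rhi)
    (hsucc : succAI d1 (Set.Icc a0 abar) r r') :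
    ∃ p ∈ M, p.1 ≤ a ∧ Vfun uA M r = uA p.1 r - p.2 := by
  obtain ⟨hMne, hMcpt, hMsub⟩ := hM
  have hr : r ∈ Set.Icc rlo rhi := hrDR.1
  -- upper bound for Vfun on compact sets
  have hub : ∀ (K' : Set (ℝ × ℝ)), IsCompact K' → K'.Nonempty → ∀ s : ℝ, ∀ q ∈ K',
      uA q.1 s - q.2 ≤ Vfun uA K' s := by
    intro K' h1 h2 s q hq
    obtain ⟨p, _, he, hm⟩ := argmax_lemma uA huA K' h1 h2 s
    rw [he]; exact hm q hq
  -- dual reply inequality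
  have hdual : ∀ s ∈ Set.Icc rlo rhi, uA a s - Vfun uA M s ≤ uA a r - Vfun uA M r := by
    intro s hs
    rw [hrDR.2]
    refine le_csSup ?_ (mem_image_of_mem _ hs)
    obtain ⟨p0, hp0⟩ := hMne
    have hgcont : ContinuousOn (fun s => uA a s - uA p0.1 s + p0.2) (Set.Icc rlo rhi) := by
      apply Continuous.continuousOn
      exact ((huA.comp (continuous_const.prodMk continuous_id)).sub
        (huA.comp (continuous_const.prodMk continuous_id))).add continuous_const
    obtain ⟨C, hC⟩ := isCompact_Icc.bddAbove_image hgcont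
    refine ⟨C, ?_⟩
    rintro y ⟨s', hs', rfl⟩
    show uA a s' - Vfun uA M s' ≤ C
    have h1 : uA p0.1 s' - p0.2 ≤ Vfun uA M s' := hub M hMcpt ⟨p0, hp0⟩ s' p0 hp0
    have h2 : uA a s' - uA p0.1 s' + p0.2 ≤ C := hC (mem_image_of_mem _ hs')
    linarith
  -- exchange inequality
  have hexch : ∀ s ∈ Set.Icc rlo rhi, ∀ p ∈ M, Vfun uA M s = uA p.1 s - p.2 →
      uA p.1 r - uA p.1 s ≤ uA a r - uA a s := by
    intro s hs p hp heq
    have h1 := hdual s hs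
    have h2 : uA p.1 r - p.2 ≤ Vfun uA M r := hub M hMcpt hMne r p hp
    rw [heq] at h1
    linarith
  have hcontx : ∀ s : ℝ, Continuous fun x => uA x s := fun s =>
    huA.comp (continuous_id.prodMk continuous_const)
  have hderiv : ∀ (s s' x : ℝ), deriv (fun x => uA x s - uA x s') x = d1 x s - d1 x s' :=
    fun s s' x => ((hd1 x s).sub (hd1 x s')).deriv
  -- strict monotonicity helper
  have hsm : ∀ s1 s2 : ℝ, (∀ x ∈ Set.Icc a0 abar, d1 x s2 < d1 x s1) →
      StrictMonoOn (fun x => uA x s1 - uA x s2) (Set.Icc a0 abar) := by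
    intro s1 s2 hlt
    apply strictMonoOn_of_deriv_pos (convex_Icc _ _)
      (((hcontx s1).sub (hcontx s2)).continuousOn)
    intro x hx
    rw [interior_Icc] at hx
    show 0 < deriv (fun x => uA x s1 - uA x s2) x
    rw [hderiv]
    have := hlt x (Ioo_subset_Icc_self hx)
    linarith
  -- if r strictly dominates s, every argmax of V(s) is ≤ a
  have hle : ∀ s ∈ Set.Icc rlo rhi, (∀ x ∈ Set.Icc a0 abar, d1 x s < d1 x r) →
      ∀ p ∈ M, Vfun uA M s = uA p.1 s - p.2 → p.1 ≤ a := by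
    intro s hs hlt p hp heq
    have hx := hexch s hs p hp heq
    by_contra hgt
    push_neg at hgt
    have hpA : p.1 ∈ Set.Icc a0 abar := (hMsub hp).1
    have h3 : uA a r - uA a s < uA p.1 r - uA p.1 s := hsm r s hlt ha hpA hgt
    linarith
  have hltr' : ∀ x ∈ Set.Icc a0 abar, d1 x r' < d1 x r := hRI.2 r hr r' hr' hsucc
  obtain ⟨p', hp'M, hp'eq, _⟩ := argmax_lemma uA huA M hMcpt hMne r'
  have hp'le : p'.1 ≤ a := hle r' hr' hltr' p' hp'M hp'eq
  -- the truncated contract K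
  set K : Set (ℝ × ℝ) := M ∩ {p : ℝ × ℝ | p.1 ≤ a} with hKdef
  have hKcpt : IsCompact K := hMcpt.inter_right (isClosed_le continuous_fst continuous_const)
  have hKne : K.Nonempty := ⟨p', hp'M, hp'le⟩
  have hKsub : K ⊆ M := inter_subset_left
  have hWV : ∀ s : ℝ, Vfun uA K s ≤ Vfun uA M s := by
    intro s
    obtain ⟨q, hqK, hqeq, _⟩ := argmax_lemma uA huA K hKcpt hKne s
    rw [hqeq]
    exact hub M hMcpt hMne s q (hKsub hqK)
  -- continuity of V-functions
  have hVcont : ∀ (K' : Set (ℝ × ℝ)), IsCompact K' → Continuous (Vfun uA K') := by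
    intro K' hcpt
    have hcont : Continuous (Function.uncurry (fun (s : ℝ) (p : ℝ × ℝ) => uA p.1 s - p.2)) := by
      have he : (Function.uncurry (fun (s : ℝ) (p : ℝ × ℝ) => uA p.1 s - p.2)) =
          fun x : ℝ × (ℝ × ℝ) => uA x.2.1 x.1 - x.2.2 := rfl
      rw [he]
      exact (huA.comp ((continuous_snd.fst).prodMk continuous_fst)).sub continuous_snd.snd
    exact hcpt.continuous_sSup hcont
  have hRsub : uIcc r' r ⊆ Set.Icc rlo rhi := by
    rw [← uIcc_of_le hR]
    exact uIcc_subset_uIcc (by rwa [uIcc_of_le hR]) (by rwa [uIcc_of_le hR])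
  set S : Set ℝ := uIcc r' r ∩ {s | Vfun uA M s ≤ Vfun uA K s} with hSdef
  have hScpt : IsCompact S :=
    isCompact_uIcc.inter_right (isClosed_le (hVcont M hMcpt) (hVcont K hKcpt))
  have hr'S : r' ∈ S := by
    refine ⟨left_mem_uIcc, ?_⟩
    show Vfun uA M r' ≤ Vfun uA K r'
    rw [hp'eq]
    exact hub K hKcpt hKne r' p' ⟨hp'M, hp'le⟩
  obtain ⟨sstar, hsS, hsmin⟩ := hScpt.exists_isMinOn ⟨r', hr'S⟩
    ((continuous_abs.comp (continuous_id.sub continuous_const)).continuousOn :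
      ContinuousOn (fun s : ℝ => |s - r|) S)
  -- final extraction, common to several cases
  have finish : Vfun uA M r ≤ Vfun uA K r → ∃ p ∈ M, p.1 ≤ a ∧ Vfun uA M r = uA p.1 r - p.2 := by
    intro hVrW
    obtain ⟨p, hpK, he, _⟩ := argmax_lemma uA huA K hKcpt hKne r
    exact ⟨p, hKsub hpK, hpK.2, by rw [← he]; exact le_antisymm hVrW (hWV r)⟩
  by_cases hsr : sstar = r
  · exact finish (by rw [← hsr]; exact hsS.2)
  · have hsR : sstar ∈ Set.Icc rlo rhi := hRsub hsS.1
    -- d1 · sstar ≥ d1 · r on A  by a limit argument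
    have hges : ∀ x ∈ Set.Icc a0 abar, d1 x r ≤ d1 x sstar := by
      intro x hx
      have hcomp : ∀ θ : ℝ, θ ∈ Set.Ioc (0:ℝ) 1 → d1 x r ≤ d1 x (sstar + θ * (r - sstar)) := by
        intro θ hθ
        set s := sstar + θ * (r - sstar) with hs_def
        have hsmem : s ∈ uIcc sstar r := by
          rcases le_total sstar r with h | h
          · rw [uIcc_of_le h]
            constructor <;> nlinarith [hθ.1, hθ.2]
          · rw [uIcc_of_ge h]
            constructor <;> nlinarith [hθ.1, hθ.2]
        have hsub2 : uIcc sstar r ⊆ uIcc r' r := uIcc_subset_uIcc hsS.1 right_mem_uIcc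
        have hsRR : s ∈ Set.Icc rlo rhi := hRsub (hsub2 hsmem)
        have hdist : |s - r| < |sstar - r| := by
          have h1 : s - r = (1 - θ) * (sstar - r) := by rw [hs_def]; ring
          rw [h1, abs_mul]
          have h0 : (0:ℝ) < |sstar - r| := abs_pos.2 (sub_ne_zero.2 hsr)
          have h2 : |1 - θ| < 1 := by
            rw [abs_of_nonneg (by linarith [hθ.2])]
            linarith [hθ.1]
          nlinarith
        have hnotS : s ∉ S := by
          intro hsmem'
          have h3 : |sstar - r| ≤ |s - r| := (isMinOn_iff.1 hsmin) s hsmem'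
          linarith
        have hVW : ¬ (Vfun uA M s ≤ Vfun uA K s) := fun h => hnotS ⟨hsub2 hsmem, h⟩
        rcases hRI.1 r hr s hsRR with hcase | hcase
        · by_cases hsr2 : succeqAI d1 (Set.Icc a0 abar) s r
          · exact hsr2 x hx
          · exfalso
            have hlt2 : ∀ y ∈ Set.Icc a0 abar, d1 y s < d1 y r :=
              hRI.2 r hr s hsRR ⟨hcase, hsr2⟩
            obtain ⟨q, hqM, hqe, _⟩ := argmax_lemma uA huA M hMcpt hMne s
            have hq_le := hle s hsRR hlt2 q hqM hqe
            exact hVW (by rw [hqe]; exact hub K hKcpt hKne s q ⟨hqM, hq_le⟩)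
        · exact hcase x hx
      have hlim : Filter.Tendsto (fun θ : ℝ => sstar + θ * (r - sstar)) (nhdsWithin 0 (Set.Ioi 0))
          (nhds sstar) := by
        have h0 : Filter.Tendsto (fun θ : ℝ => sstar + θ * (r - sstar)) (nhds 0)
            (nhds (sstar + 0 * (r - sstar))) := by
          apply Continuous.tendsto
          exact continuous_const.add (continuous_id.mul continuous_const)
        simpa using h0.mono_left nhdsWithin_le_nhds
      have hd1cont : Continuous fun sR => d1 x sR :=
        hd1c.comp (continuous_const.prodMk continuous_id)
      have htend : Filter.Tendsto (fun θ : ℝ => d1 x (sstar + θ * (r - sstar)))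
          (nhdsWithin 0 (Set.Ioi 0)) (nhds (d1 x sstar)) := (hd1cont.tendsto _).comp hlim
      refine ge_of_tendsto htend ?_
      filter_upwards [Ioc_mem_nhdsGT (by norm_num : (0:ℝ) < 1)] with θ hθ
      exact hcomp θ hθ
    by_cases hc : succeqAI d1 (Set.Icc a0 abar) r sstar
    · -- equal derivatives: differences are constant
      have heqd : ∀ x ∈ Set.Icc a0 abar, d1 x sstar = d1 x r :=
        fun x hx => le_antisymm (hc x hx) (hges x hx)
      have hcontf : ContinuousOn (fun x => uA x sstar - uA x r) (Set.Icc a0 abar) :=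
        ((hcontx sstar).sub (hcontx r)).continuousOn
      have hdiff : DifferentiableOn ℝ (fun x => uA x sstar - uA x r)
          (interior (Set.Icc a0 abar)) := fun x _ =>
        ((hd1 x sstar).sub (hd1 x r)).differentiableAt.differentiableWithinAt
      have hmono : MonotoneOn (fun x => uA x sstar - uA x r) (Set.Icc a0 abar) := by
        apply monotoneOn_of_deriv_nonneg (convex_Icc _ _) hcontf hdiff
        intro x hx
        rw [interior_Icc] at hx
        show 0 ≤ deriv (fun x => uA x sstar - uA x r) x
        rw [hderiv]
        have := heqd x (Ioo_subset_Icc_self hx)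
        linarith
      have hanti : AntitoneOn (fun x => uA x sstar - uA x r) (Set.Icc a0 abar) := by
        apply antitoneOn_of_deriv_nonpos (convex_Icc _ _) hcontf hdiff
        intro x hx
        rw [interior_Icc] at hx
        show deriv (fun x => uA x sstar - uA x r) x ≤ 0
        rw [hderiv]
        have := heqd x (Ioo_subset_Icc_self hx)
        linarith
      have hconst : ∀ x ∈ Set.Icc a0 abar, uA x sstar - uA x r = uA a sstar - uA a r := by
        intro x hx
        rcases le_total x a with h | h
        · exact le_antisymm (hmono hx ha h) (hanti hx ha h)
        · exact le_antisymm (hanti ha hx h) (hmono ha hx h)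
      have hshift : ∀ (K' : Set (ℝ × ℝ)), IsCompact K' → K'.Nonempty → K' ⊆ M →
          Vfun uA K' sstar - Vfun uA K' r = uA a sstar - uA a r := by
        intro K' h1 h2 h3
        obtain ⟨p1, hp1, he1, _⟩ := argmax_lemma uA huA K' h1 h2 sstar
        obtain ⟨p2, hp2, he2, _⟩ := argmax_lemma uA huA K' h1 h2 r
        have e1 := hconst p1.1 (hMsub (h3 hp1)).1
        have e2 := hconst p2.1 (hMsub (h3 hp2)).1
        have i1 : uA p2.1 sstar - p2.2 ≤ Vfun uA K' sstar := hub K' h1 h2 sstar p2 hp2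
        have i2 : uA p1.1 r - p1.2 ≤ Vfun uA K' r := hub K' h1 h2 r p1 hp1
        rw [he1] at i1 ⊢
        rw [he2] at i2 ⊢
        linarith
      have h1 := hshift M hMcpt hMne (subset_refl M)
      have h2 := hshift K hKcpt hKne hKsub
      have h3 : Vfun uA M sstar ≤ Vfun uA K sstar := hsS.2
      exact finish (by linarith)
    · -- sstar strictly dominates r
      have hstr : ∀ x ∈ Set.Icc a0 abar, d1 x r < d1 x sstar :=
        hRI.2 sstar hsR r hr ⟨hges, hc⟩
      obtain ⟨p, hpK, he, _⟩ := argmax_lemma uA huA K hKcpt hKne sstar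
      have hVeq : Vfun uA M sstar = uA p.1 sstar - p.2 :=
        le_antisymm (le_trans hsS.2 (le_of_eq he)) (hub M hMcpt hMne sstar p (hKsub hpK))
      have hx := hexch sstar hsR p (hKsub hpK) hVeq
      have hpA : p.1 ∈ Set.Icc a0 abar := (hMsub (hKsub hpK)).1
      have hpa : p.1 = a := by
        rcases lt_or_ge p.1 a with h | h
        · exfalso
          have h3 : uA p.1 sstar - uA p.1 r < uA a sstar - uA a r := hsm sstar r hstr hpA ha h
          linarith
        · exact le_antisymm hpK.2 h
      have hd := hdual sstar hsR
      have hfeas : uA p.1 r - p.2 ≤ Vfun uA M r := hub M hMcpt hMne r p (hKsub hpK)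
      refine ⟨p, hKsub hpK, le_of_eq hpa, ?_⟩
      refine le_antisymm ?_ hfeas
      rw [hpa] at hVeq ⊢
      linarith

/-- Under ranked incentives, if `r ∈ R(a;M)` and `r ≻_AI r'` for some `r' ∈ R`,
then `V(r;M)` is attained at some plan `(ã,t̃) ∈ M` with `ã ≤ a`; symmetrically, if
`r' ≻_AI r` for some `r' ∈ R`, then `V(r;M)` is attained at some plan with `ã ≥ a`. -/
theorem stmt6 (a0 abar rlo rhi : ℝ) (hA : a0 < abar) (hR : rlo < rhi)
    (uA : ℝ → ℝ → ℝ) (huA : Continuous fun p : ℝ × ℝ => uA p.1 p.2)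
    (d1 : ℝ → ℝ → ℝ)
    (hd1 : ∀ a r : ℝ, HasDerivAt (fun x => uA x r) (d1 a r) a)
    (hd1c : Continuous fun p : ℝ × ℝ => d1 p.1 p.2)
    (hRI : RankedIncentives d1 (Set.Icc a0 abar) (Set.Icc rlo rhi))
    (M : Set (ℝ × ℝ)) (hM : IsContract a0 abar M)
    (a : ℝ) (ha : a ∈ Set.Icc a0 abar)
    (r : ℝ) (hrDR : r ∈ dualReplies uA (Set.Icc rlo rhi) M a) :
    ((∃ r' ∈ Set.Icc rlo rhi, succAI d1 (Set.Icc a0 abar) r r') →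
      ∃ p ∈ M, p.1 ≤ a ∧ Vfun uA M r = uA p.1 r - p.2) ∧
    ((∃ r' ∈ Set.Icc rlo rhi, succAI d1 (Set.Icc a0 abar) r' r) →
      ∃ p ∈ M, a ≤ p.1 ∧ Vfun uA M r = uA p.1 r - p.2) := by
  constructor
  · rintro ⟨r', hr', hsucc⟩
    exact core a0 abar rlo rhi hR.le uA huA d1 hd1 hd1c hRI M hM a ha r hrDR r' hr' hsucc
  · rintro ⟨r', hr', hsucc⟩
    have hrefl : Continuous (fun p : ℝ × ℝ => ((-p.1, p.2) : ℝ × ℝ)) :=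
      (continuous_fst.neg).prodMk continuous_snd
    set uB : ℝ → ℝ → ℝ := fun x s => uA (-x) s with huBdef
    set d1B : ℝ → ℝ → ℝ := fun x s => -(d1 (-x) s) with hd1Bdef
    set MB : Set (ℝ × ℝ) := (fun p : ℝ × ℝ => ((-p.1, p.2) : ℝ × ℝ)) '' M with hMBdef
    have huB : Continuous fun p : ℝ × ℝ => uB p.1 p.2 :=
      huA.comp ((continuous_fst.neg).prodMk continuous_snd)
    have hd1B : ∀ x s : ℝ, HasDerivAt (fun y => uB y s) (d1B x s) x := by
      intro x s
      have h := (hd1 (-x) s).comp x (hasDerivAt_neg x)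
      simpa [Function.comp_def, uB, d1B, mul_comm] using h
    have hd1Bc : Continuous fun p : ℝ × ℝ => d1B p.1 p.2 :=
      (hd1c.comp ((continuous_fst.neg).prodMk continuous_snd)).neg
    have hmem : ∀ x : ℝ, x ∈ Set.Icc (-abar) (-a0) → -x ∈ Set.Icc a0 abar := by
      intro x hx
      simp only [Set.mem_Icc] at hx ⊢
      constructor <;> linarith [hx.1, hx.2]
    have hmem' : ∀ x : ℝ, x ∈ Set.Icc a0 abar → -x ∈ Set.Icc (-abar) (-a0) := by
      intro x hx
      simp only [Set.mem_Icc] at hx ⊢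
      constructor <;> linarith [hx.1, hx.2]
    have hiff : ∀ r1 r2 : ℝ, succeqAI d1B (Set.Icc (-abar) (-a0)) r1 r2 ↔
        succeqAI d1 (Set.Icc a0 abar) r2 r1 := by
      intro r1 r2
      constructor
      · intro h x hx
        have h2 := h (-x) (hmem' x hx)
        simp only [d1B, neg_neg] at h2
        linarith
      · intro h x hx
        have h2 := h (-x) (hmem x hx)
        simp only [d1B]
        linarith
    have hRIB : RankedIncentives d1B (Set.Icc (-abar) (-a0)) (Set.Icc rlo rhi) := by
      constructor
      · intro r1 h1 r2 h2
        rcases hRI.1 r1 h1 r2 h2 with h | h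
        · exact Or.inr ((hiff r2 r1).2 h)
        · exact Or.inl ((hiff r1 r2).2 h)
      · intro r1 h1 r2 h2 hs x hx
        have hs' : succAI d1 (Set.Icc a0 abar) r2 r1 :=
          ⟨(hiff r1 r2).1 hs.1, fun hcon => hs.2 ((hiff r2 r1).2 hcon)⟩
        have h3 := hRI.2 r2 h2 r1 h1 hs' (-x) (hmem x hx)
        simp only [d1B]
        linarith
    have hMB : IsContract (-abar) (-a0) MB := by
      obtain ⟨hMne, hMcpt, hMsub⟩ := hM
      refine ⟨hMne.image _, hMcpt.image hrefl, ?_⟩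
      rintro q ⟨p, hp, rfl⟩
      have h4 := (hMsub hp).1
      simp only [Set.mem_prod, Set.mem_Icc, Set.mem_univ, and_true] at h4 ⊢
      constructor <;> linarith [h4.1, h4.2]
    have hVeq : ∀ s : ℝ, Vfun uB MB s = Vfun uA M s := by
      intro s
      show sSup _ = sSup _
      congr 1
      rw [hMBdef, Set.image_image]
      apply Set.image_congr
      intro p _
      simp [uB]
    have haB : -a ∈ Set.Icc (-abar) (-a0) := hmem' a ha
    have hTeq : Tfun uB (Set.Icc rlo rhi) MB (-a) = Tfun uA (Set.Icc rlo rhi) M a := by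
      show sSup _ = sSup _
      congr 1
      apply Set.image_congr
      intro s _
      rw [hVeq]
      simp [uB]
    have hrDRB : r ∈ dualReplies uB (Set.Icc rlo rhi) MB (-a) := by
      refine ⟨hrDR.1, ?_⟩
      rw [hTeq, hVeq]
      have h5 : uB (-a) r = uA a r := by simp [uB]
      rw [h5]
      exact hrDR.2
    have hsuccB : succAI d1B (Set.Icc (-abar) (-a0)) r r' :=
      ⟨(hiff r r').2 hsucc.1, fun hcon => hsucc.2 ((hiff r' r).1 hcon)⟩
    obtain ⟨q, hqMB, hq1, hqV⟩ := core (-abar) (-a0) rlo rhi hR.le uB huB d1B hd1B hd1Bc hRIB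
      MB hMB (-a) haB r hrDRB r' hr' hsuccB
    obtain ⟨p, hpM, rfl⟩ := hqMB
    have hq1' : -p.1 ≤ -a := hq1
    refine ⟨p, hpM, by linarith, ?_⟩
    rw [← hVeq r, hqV]
    show uB (-p.1) r - p.2 = uA p.1 r - p.2
    simp [uB]
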